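/- arXiv:0812.1249 — 2 statements merged into one kernel-verified Lean document; each statement's English description precedes it below -/
import Mathlib

section
/- Define f(v) := 1 + Σ_T ((t+1)/t)^{κ(v^T)} t^{|T|+1} summed over subsets T of positions of v. For the alternating word z_{n-1} = xyxy... of length n-1 and any non-alternating word v of length n-1, every coefficient of f(z_{n-1}) is strictly greater than the corresponding coefficient of f(v) in degrees 0 through n-1. -/
/-- `κ(w) = 2 + #{i : w_i ≠ w_{i+1}}` for nonempty `w`, and `κ(empty) = 1`. -/
def kappa (w : List Bool) : ℕ :=
  if w = [] then 1 else 2 + (w.zip w.tail).countP (fun p => p.1 != p.2)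

/-- The subword of `v` at the (1-indexed) positions in `T`. -/
def subword (v : List Bool) (T : Finset ℕ) : List Bool :=
  (v.zipIdx.filter (fun p => decide (p.2 + 1 ∈ T))).map Prod.fst

/-- The `f`-polynomial `F_v(t) = 1 + ∑_{T ⊆ [|v|]} ((t+1)/t)^{κ(v^T)} t^{|T|+1}`,
written with the power of `t` as `t^{|T|+1-κ(v^T)}` (valid since `κ(v^T) ≤ |T|+1`). -/
noncomputable def fPoly (v : List Bool) : Polynomial ℤ :=
  1 + ∑ T ∈ (Finset.Icc 1 v.length).powerset,
      (Polynomial.X + 1) ^ kappa (subword v T) *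
        Polynomial.X ^ (T.card + 1 - kappa (subword v T))

/-- The alternating word of length `m` starting with `x` (where `x = false`, `y = true`). -/
def zWord (m : ℕ) : List Bool := (List.range m).map (fun i => decide (i % 2 = 1))

open List Finset Polynomial

lemma enumFrom_filter_map (f : ℕ → Bool) : ∀ (v : List Bool) (n : ℕ),
    ((v.zipIdx n).filter (fun p => f p.2)).map Prod.fst
      = ((List.range v.length).filter (fun i => f (n+i))).map (fun i => v.getD i false)
  | [], n => by simp
  | a :: v, n => by
    have IH := enumFrom_filter_map f v (n+1)
    simp only [List.zipIdx_cons, List.length_cons, List.range_succ_eq_map,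
      List.filter_cons, List.filter_map, List.map_map]
    have hcomp : List.filter ((fun i => f (n + i)) ∘ Nat.succ) (List.range v.length)
        = List.filter (fun i => f (n + 1 + i)) (List.range v.length) := by
      apply List.filter_congr; intro x _; simp [Function.comp]; ring_nf
    rw [hcomp]
    have hmap : List.map ((fun i => (a :: v).getD i false) ∘ Nat.succ)
        (List.filter (fun i => f (n + 1 + i)) (List.range v.length))
        = List.map (fun i => v.getD i false)
          (List.filter (fun i => f (n + 1 + i)) (List.range v.length)) := by
      apply List.map_congr_left; intro x _; simp [Function.comp]
    have hn0 : n + 0 = n := rfl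
    rw [hn0]
    cases hfn : f n <;> simp only [if_pos, if_neg, Bool.false_eq_true, if_false, if_true,
      List.map_cons, List.map_map, hmap, IH] <;> simp

lemma subword_eq_range (v : List Bool) (T : Finset ℕ) :
    subword v T = ((List.range v.length).filter (fun i => decide (i+1 ∈ T))).map
      (fun i => v.getD i false) := by
  have := enumFrom_filter_map (fun k => decide (k+1 ∈ T)) v 0
  simp only [Nat.zero_add] at this
  rw [subword, this]

lemma subword_empty (v : List Bool) : subword v (∅ : Finset ℕ) = [] := by
  simp [subword_eq_range]

lemma subword_insert (v : List Bool) (T : Finset ℕ) (j : ℕ) (hj : j < v.length)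
    (hT : T ⊆ Finset.Icc 1 j) :
    subword v (insert (j+1) T) = subword v T ++ [v.getD j false] := by
  rw [subword_eq_range, subword_eq_range]
  have hlen : v.length = (j+1) + (v.length - (j+1)) := by omega
  rw [hlen, List.range_add, List.range_succ]
  have hbound : ∀ k ∈ T, 1 ≤ k ∧ k ≤ j := by
    intro k hk; exact Finset.mem_Icc.mp (hT hk)
  have h1 : ∀ (S : Finset ℕ) , (∀ x ∈ List.range (v.length - (j+1)),
      decide ((fun x => j + 1 + x) x + 1 ∈ S) = false) →
      List.filter (fun i => decide (i+1 ∈ S)) (List.map (fun x => j + 1 + x) (List.range (v.length - (j+1)))) = [] := by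
    intro S hS
    rw [List.filter_map, List.filter_eq_nil_iff.mpr]
    · simp
    · intro x hx
      have := hS x hx
      simpa using this
  have htail : List.filter (fun i => decide (i+1 ∈ insert (j+1) T)) (List.map (fun x => j + 1 + x) (List.range (v.length - (j+1)))) = [] := by
    apply h1; intro x _
    simp only [decide_eq_false_iff_not, Finset.mem_insert]
    push_neg
    constructor
    · omega
    · intro hmem; have := hbound _ hmem; omega
  have htail2 : List.filter (fun i => decide (i+1 ∈ T)) (List.map (fun x => j + 1 + x) (List.range (v.length - (j+1)))) = [] := by
    apply h1; intro x _
    simp only [decide_eq_false_iff_not]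
    intro hmem; have := hbound _ hmem; omega
  simp only [List.filter_append]
  rw [htail, htail2]
  have hhead : List.filter (fun i => decide (i+1 ∈ insert (j+1) T)) (List.range j)
      = List.filter (fun i => decide (i+1 ∈ T)) (List.range j) := by
    apply List.filter_congr; intro x hx
    simp only [List.mem_range] at hx
    simp only [decide_eq_decide, Finset.mem_insert]
    constructor
    · rintro (h | h); · omega
      · exact h
    · intro h; exact Or.inr h
  have hj1 : List.filter (fun i => decide (i+1 ∈ insert (j+1) T)) [j] = [j] := by simp
  have hj2 : List.filter (fun i => decide (i+1 ∈ T)) [j] = [] := by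
    simp only [List.filter_cons, decide_eq_true_eq]
    rw [if_neg]
    · rfl
    · intro hmem; have := hbound _ hmem; omega
  rw [hhead, hj1, hj2]
  simp

lemma subword_ne_nil (v : List Bool) (T : Finset ℕ) (hT : T ⊆ Finset.Icc 1 v.length)
    (hne : T.Nonempty) : subword v T ≠ [] := by
  obtain ⟨k, hk⟩ := hne
  have hb := Finset.mem_Icc.mp (hT hk)
  rw [subword_eq_range]
  intro h
  rw [List.map_eq_nil_iff, List.filter_eq_nil_iff] at h
  apply h (k-1)
  · simp only [List.mem_range]; omega
  · simp only [decide_eq_true_eq]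
    have : k - 1 + 1 = k := by omega
    rw [this]; exact hk

lemma subword_length_le (v : List Bool) (T : Finset ℕ) :
    (subword v T).length ≤ T.card := by
  rw [subword_eq_range, List.length_map]
  have hsub : List.filter (fun i => decide (i+1 ∈ T)) (List.range v.length) <+ List.range v.length :=
    List.filter_sublist
  set l := List.filter (fun i => decide (i+1 ∈ T)) (List.range v.length) with hl
  have hnd : l.Nodup := (List.nodup_range).sublist hsub
  have hnd2 : (l.map (· + 1)).Nodup := hnd.map (fun a b => by omega)
  have hsubT : (l.map (· + 1)).toFinset ⊆ T := by
    intro x hx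
    simp only [List.mem_toFinset, List.mem_map] at hx
    obtain ⟨i, hi, rfl⟩ := hx
    have := List.of_mem_filter hi
    simpa using this
  calc l.length = (l.map (· + 1)).length := by simp
    _ = (l.map (· + 1)).toFinset.card := (List.toFinset_card_of_nodup hnd2).symm
    _ ≤ T.card := Finset.card_le_card hsubT

lemma kappa_le (w : List Bool) : kappa w ≤ w.length + 1 := by
  rw [kappa]
  split
  · simp
  · rename_i h
    have h1 : (w.zip w.tail).countP (fun p => p.1 != p.2) ≤ (w.zip w.tail).length :=
      List.countP_le_length
    have h2 : (w.zip w.tail).length ≤ w.tail.length := by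
      rw [List.length_zip]; omega
    have h3 : w.length ≥ 1 := by
      cases w; · simp at h
      · simp
    simp only [List.length_tail] at h2
    omega

lemma kappa_subword_le (v : List Bool) (T : Finset ℕ) :
    kappa (subword v T) ≤ T.card + 1 := by
  have := kappa_le (subword v T)
  have := subword_length_le v T
  omega

lemma kappa_snoc (w : List Bool) (a : Bool) :
    kappa (w ++ [a]) = kappa w + (if w.getLast? = some a then 0 else 1) := by
  induction w with
  | nil => simp [kappa]
  | cons b t ih =>
    cases t with
    | nil => cases b <;> cases a <;> simp [kappa, List.countP_cons]
    | cons c s =>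
      have key : ∀ (u : List Bool) (x y : Bool),
          kappa (x :: y :: u) = (if x != y then 1 else 0) + kappa (y :: u) := by
        intro u x y
        simp only [kappa, List.zip_cons_cons, List.tail_cons, List.countP_cons,
          if_neg (List.cons_ne_nil _ _)]
        cases h : (x != y) <;> simp [h] <;> omega
      rw [show (b :: c :: s) ++ [a] = b :: c :: (s ++ [a]) by simp,
        key (s ++ [a]) b c, key s b c]
      have ih' : kappa (c :: (s ++ [a])) = kappa (c :: s) + if (c :: s).getLast? = some a then 0 else 1 := by
        simpa using ih
      rw [ih', List.getLast?_cons_cons]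
      ring

noncomputable section
open Polynomial

def term (v : List Bool) (T : Finset ℕ) : Polynomial ℤ :=
  (X + 1) ^ kappa (subword v T) * X ^ (T.card + 1 - kappa (subword v T))

def hot (v : List Bool) (e : Bool) (T : Finset ℕ) : Prop :=
  (subword v T).getLast? ≠ some e

instance (v e) : DecidablePred (hot v e) := fun T => by unfold hot; infer_instance

def Ahat (v : List Bool) (j : ℕ) (e : Bool) : Polynomial ℤ :=
  ∑ T ∈ (Finset.Icc 1 j).powerset.filter (hot v e), term v T

def Bhat (v : List Bool) (j : ℕ) (e : Bool) : Polynomial ℤ :=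
  ∑ T ∈ (Finset.Icc 1 j).powerset.filter (fun T => ¬ hot v e T), term v T

def Shat (v : List Bool) (j : ℕ) : Polynomial ℤ :=
  ∑ T ∈ (Finset.Icc 1 j).powerset, term v T

lemma AB_add (v : List Bool) (j : ℕ) (e : Bool) :
    Ahat v j e + Bhat v j e = Shat v j :=
  Finset.sum_filter_add_sum_filter_not _ _ _

lemma powerset_step (j : ℕ) (F : Finset ℕ → Polynomial ℤ) :
    ∑ T ∈ (Finset.Icc 1 (j+1)).powerset, F T
      = ∑ T ∈ (Finset.Icc 1 j).powerset, F T
        + ∑ T ∈ (Finset.Icc 1 j).powerset, F (insert (j+1) T) := by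
  have h1 : Finset.Icc 1 (j+1) = insert (j+1) (Finset.Icc 1 j) := by
    ext x; simp [Finset.mem_Icc]; omega
  have h2 : j+1 ∉ Finset.Icc 1 j := by simp [Finset.mem_Icc]
  rw [h1, Finset.sum_powerset_insert h2]

lemma term_insert (v : List Bool) (j : ℕ) (hj : j < v.length) (T : Finset ℕ)
    (hT : T ⊆ Finset.Icc 1 j) :
    term v (insert (j+1) T)
      = term v T * (if (subword v T).getLast? = some (v.getD j false) then X else (X + 1)) := by
  have hnot : j+1 ∉ T := fun h => by have := Finset.mem_Icc.mp (hT h); omega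
  have hcard : (insert (j+1) T).card = T.card + 1 := Finset.card_insert_of_notMem hnot
  have hins := subword_insert v T j hj hT
  have hκ : kappa (subword v (insert (j+1) T))
      = kappa (subword v T) + (if (subword v T).getLast? = some (v.getD j false) then 0 else 1) := by
    rw [hins, kappa_snoc]
  have hκle := kappa_subword_le v T
  rw [term, term, hcard, hκ]
  split
  · have he : T.card + 1 + 1 - kappa (subword v T) = (T.card + 1 - kappa (subword v T)) + 1 := by omega
    rw [Nat.add_zero, he, pow_succ]
    ring
  · have he : T.card + 1 + 1 - (kappa (subword v T) + 1) = T.card + 1 - kappa (subword v T) := by omega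
    rw [he, pow_succ]
    ring

lemma getLast_insert (v : List Bool) (j : ℕ) (hj : j < v.length) (T : Finset ℕ)
    (hT : T ⊆ Finset.Icc 1 j) :
    (subword v (insert (j+1) T)).getLast? = some (v.getD j false) := by
  rw [subword_insert v T j hj hT]
  simp

lemma sum_insert_terms (v : List Bool) (j : ℕ) (hj : j < v.length) :
    ∑ T ∈ (Finset.Icc 1 j).powerset, term v (insert (j+1) T)
      = (X+1) * Ahat v j (v.getD j false) + X * Bhat v j (v.getD j false) := by
  rw [Ahat, Bhat, Finset.mul_sum, Finset.mul_sum,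
    ← Finset.sum_filter_add_sum_filter_not ((Finset.Icc 1 j).powerset) (hot v (v.getD j false))
      (fun T => term v (insert (j+1) T))]
  refine congrArg₂ HAdd.hAdd ?_ ?_
  · apply Finset.sum_congr rfl
    intro T hT
    simp only [Finset.mem_filter, Finset.mem_powerset] at hT
    rw [term_insert v j hj T hT.1, if_neg hT.2]
    ring
  · apply Finset.sum_congr rfl
    intro T hT
    simp only [Finset.mem_filter, Finset.mem_powerset, hot, not_not] at hT
    rw [term_insert v j hj T hT.1, if_pos hT.2]
    ring

lemma Shat_step (v : List Bool) (j : ℕ) (hj : j < v.length) :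
    Shat v (j+1) = (X+1) * Shat v j + Ahat v j (v.getD j false) := by
  rw [Shat, powerset_step j (term v), sum_insert_terms v j hj]
  have hAB := AB_add v j (v.getD j false)
  rw [← Shat]
  linear_combination (X : Polynomial ℤ) * hAB + hAB - hAB

lemma term_empty (v : List Bool) : term v ∅ = X + 1 := by
  rw [term, subword_empty]
  simp [kappa]

lemma Ahat_step_same (v : List Bool) (j : ℕ) (hj : j < v.length) :
    Ahat v (j+1) (v.getD j false) = Ahat v j (v.getD j false) := by
  set a := v.getD j false
  rw [Ahat, Finset.sum_filter, powerset_step, Ahat, Finset.sum_filter]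
  have hz : ∑ T ∈ (Finset.Icc 1 j).powerset,
      (if hot v a (insert (j+1) T) then term v (insert (j+1) T) else 0) = 0 := by
    apply Finset.sum_eq_zero
    intro T hT
    rw [Finset.mem_powerset] at hT
    rw [if_neg]
    rw [hot, getLast_insert v j hj T hT]
    exact fun h => h rfl
  rw [hz, add_zero]

lemma Ahat_step_ne (v : List Bool) (j : ℕ) (hj : j < v.length) (e : Bool)
    (he : v.getD j false ≠ e) :
    Ahat v (j+1) e = (X+1) * Shat v j + (X+1) := by
  set a := v.getD j false with ha
  rw [Ahat, Finset.sum_filter, powerset_step]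
  have hnew : ∑ T ∈ (Finset.Icc 1 j).powerset,
      (if hot v e (insert (j+1) T) then term v (insert (j+1) T) else 0)
      = (X+1) * Ahat v j a + X * Bhat v j a := by
    rw [← sum_insert_terms v j hj]
    apply Finset.sum_congr rfl
    intro T hT
    rw [Finset.mem_powerset] at hT
    rw [if_pos]
    rw [hot, getLast_insert v j hj T hT]
    simp only [ne_eq, Option.some.injEq]
    exact he
  have hold : ∑ T ∈ (Finset.Icc 1 j).powerset, (if hot v e T then term v T else 0)
      = (X+1) + Bhat v j a := by
    have hpt : ∀ T ∈ (Finset.Icc 1 j).powerset,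
        (if hot v e T then term v T else 0)
          = (if T = ∅ then term v T else 0) + (if ¬ hot v a T then term v T else 0) := by
      intro T hT
      rw [Finset.mem_powerset] at hT
      by_cases hemp : T = ∅
      · subst hemp
        rw [if_pos, if_pos, if_neg]
        · simp
        · rw [hot, subword_empty]; simp
        · rfl
        · rw [hot, subword_empty]; simp
      · have hne : subword v T ≠ [] := by
          apply subword_ne_nil
          · exact fun x hx => by
              have := Finset.mem_Icc.mp (hT hx); rw [Finset.mem_Icc]
              constructor; · exact this.1
              · omega
          · exact Finset.nonempty_iff_ne_empty.mpr hemp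
        obtain ⟨ℓ, hℓ⟩ := Option.ne_none_iff_exists'.mp (fun h => hne (List.getLast?_eq_none_iff.mp h))
        rw [if_neg hemp, zero_add]
        congr 1
        rw [hot, hot, hℓ]
        simp only [ne_eq, Option.some.injEq, not_not, eq_iff_iff]
        revert he; cases ℓ <;> cases e <;> cases a <;> simp_all <;> intro h <;> simp_all
    rw [Finset.sum_congr rfl hpt, Finset.sum_add_distrib]
    congr 1
    · rw [Finset.sum_ite_eq' ((Finset.Icc 1 j).powerset) (∅ : Finset ℕ) (term v)]
      rw [if_pos (Finset.empty_mem_powerset _), term_empty]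
    · rw [Bhat, Finset.sum_filter]
  rw [hnew, hold]
  have hAB := AB_add v j a
  rw [← AB_add v j a]
  ring

def nn (p : Polynomial ℤ) : Prop := ∀ i, 0 ≤ p.coeff i

def cle (p q : Polynomial ℤ) : Prop := ∀ i, p.coeff i ≤ q.coeff i

lemma cle_refl (p : Polynomial ℤ) : cle p p := fun _ => le_refl _

lemma cle_trans {p q r : Polynomial ℤ} (h1 : cle p q) (h2 : cle q r) : cle p r :=
  fun i => le_trans (h1 i) (h2 i)

lemma cle_add {p q r s : Polynomial ℤ} (h1 : cle p q) (h2 : cle r s) : cle (p+r) (q+s) := by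
  intro i; rw [coeff_add, coeff_add]; exact add_le_add (h1 i) (h2 i)

lemma nn_add {p q : Polynomial ℤ} (hp : nn p) (hq : nn q) : nn (p+q) := by
  intro i; rw [coeff_add]; exact add_nonneg (hp i) (hq i)

lemma nn_mul {p q : Polynomial ℤ} (hp : nn p) (hq : nn q) : nn (p*q) := by
  intro i; rw [coeff_mul]
  exact Finset.sum_nonneg fun x _ => mul_nonneg (hp x.1) (hq x.2)

lemma nn_X : nn (X : Polynomial ℤ) := by
  intro i; rw [coeff_X]; split <;> simp

lemma nn_X1 : nn (X + 1 : Polynomial ℤ) := by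
  intro i
  rw [coeff_add, coeff_X, coeff_one]
  split <;> split <;> simp_all

lemma nn_pow {p : Polynomial ℤ} (hp : nn p) (k : ℕ) : nn (p ^ k) := by
  induction k with
  | zero => intro i; simp [coeff_one]; split <;> simp
  | succ k ih => rw [pow_succ]; exact nn_mul ih hp

lemma nn_term (v : List Bool) (T : Finset ℕ) : nn (term v T) :=
  nn_mul (nn_pow nn_X1 _) (nn_pow nn_X _)

lemma nn_sum {s : Finset (Finset ℕ)} {f : Finset ℕ → Polynomial ℤ}
    (h : ∀ T ∈ s, nn (f T)) : nn (∑ T ∈ s, f T) := by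
  intro i
  rw [Polynomial.finset_sum_coeff]
  exact Finset.sum_nonneg fun T hT => h T hT i

lemma nn_Ahat (v : List Bool) (j : ℕ) (e : Bool) : nn (Ahat v j e) :=
  nn_sum fun T _ => nn_term v T

lemma nn_Bhat (v : List Bool) (j : ℕ) (e : Bool) : nn (Bhat v j e) :=
  nn_sum fun T _ => nn_term v T

lemma nn_Shat (v : List Bool) (j : ℕ) : nn (Shat v j) :=
  nn_sum fun T _ => nn_term v T

lemma cle_self_add {p r : Polynomial ℤ} (hr : nn r) : cle p (p + r) := by
  intro i; rw [coeff_add]; have := hr i; linarith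

lemma cle_mul_left {p q : Polynomial ℤ} (r : Polynomial ℤ) (hr : nn r) (h : cle p q) :
    cle (r * p) (r * q) := by
  have hnn : nn (r * (q - p)) := by
    apply nn_mul hr
    intro i; rw [coeff_sub]; have := h i; linarith
  intro i
  have := hnn i
  rw [mul_sub, coeff_sub] at this
  linarith

lemma Ahat_le_Shat (v : List Bool) (j : ℕ) (e : Bool) : cle (Ahat v j e) (Shat v j) := by
  rw [← AB_add v j e]
  exact cle_self_add (nn_Bhat v j e)

lemma cle_self_mul_X1 {p : Polynomial ℤ} (hp : nn p) : cle p ((X+1) * p) := by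
  have h : (X+1) * p = p + X * p := by ring
  rw [h]
  exact cle_self_add (nn_mul nn_X hp)

lemma Shat_zero (v : List Bool) : Shat v 0 = X + 1 := by
  rw [Shat]
  have h : Finset.Icc 1 0 = (∅ : Finset ℕ) := by simp
  rw [h, Finset.powerset_empty, Finset.sum_singleton, term_empty]

lemma Ahat_zero (v : List Bool) (e : Bool) : Ahat v 0 e = X + 1 := by
  rw [Ahat]
  have h : Finset.Icc 1 0 = (∅ : Finset ℕ) := by simp
  rw [h, Finset.powerset_empty]
  have h2 : Finset.filter (hot v e) {(∅ : Finset ℕ)} = {(∅ : Finset ℕ)} := by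
    apply Finset.filter_true_of_mem
    intro T hT
    rw [Finset.mem_singleton] at hT
    subst hT
    rw [hot, subword_empty]
    simp
  rw [h2, Finset.sum_singleton, term_empty]

lemma Shat_lower (v : List Bool) : ∀ j, j ≤ v.length →
    cle ((X+1)^(j+1)) (Shat v j) := by
  intro j
  induction j with
  | zero => intro _; rw [Shat_zero, pow_one]; exact cle_refl _
  | succ j ih =>
    intro hj
    have hj' : j < v.length := by omega
    rw [Shat_step v j hj']
    have h1 : cle ((X+1)^(j+1+1)) ((X+1) * Shat v j) := by
      rw [pow_succ, mul_comm]
      exact cle_mul_left _ nn_X1 (ih (by omega))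
    exact cle_trans h1 (cle_self_add (nn_Ahat v j _))

section Main

variable (v : List Bool)

/-- The alternating comparison word. -/
def zW : List Bool := (List.range v.length).map (fun i => decide (i % 2 = 1))

lemma zW_length : (zW v).length = v.length := by simp [zW]

lemma zW_getD (j : ℕ) (hj : j < v.length) : (zW v).getD j false = decide (j % 2 = 1) := by
  have hj2 : j < (zW v).length := by rw [zW_length]; exact hj
  rw [List.getD_eq_getElem _ _ hj2]
  simp [zW]

lemma zW_alt (j : ℕ) (hj : j + 1 < v.length) :
    (zW v).getD j false ≠ (zW v).getD (j+1) false := by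
  rw [zW_getD v j (by omega), zW_getD v (j+1) hj]
  simp only [ne_eq, decide_eq_decide]
  omega

/-- Invariant: S-domination at all stages, A-domination at stages before the last. -/
lemma invariants : ∀ j, (j ≤ v.length → cle (Shat v j) (Shat (zW v) j)) ∧
    (j + 1 ≤ v.length →
      cle (Ahat v j (v.getD j false)) (Ahat (zW v) j ((zW v).getD j false))) := by
  intro j
  induction j with
  | zero =>
    constructor
    · intro _; rw [Shat_zero, Shat_zero]; exact cle_refl _
    · intro _; rw [Ahat_zero, Ahat_zero]; exact cle_refl _
  | succ j ih =>
    have hzlen : (zW v).length = v.length := zW_length v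
    constructor
    · intro hj
      have hjv : j < v.length := by omega
      have hjz : j < (zW v).length := by omega
      rw [Shat_step v j hjv, Shat_step (zW v) j hjz]
      exact cle_add (cle_mul_left _ nn_X1 (ih.1 (by omega))) (ih.2 (by omega))
    · intro hj
      have hjv : j < v.length := by omega
      have hjz : j < (zW v).length := by omega
      have hzstep : Ahat (zW v) (j+1) ((zW v).getD (j+1) false)
          = (X+1) * Shat (zW v) j + (X+1) := by
        apply Ahat_step_ne (zW v) j hjz
        exact zW_alt v j (by omega)
      rw [hzstep]
      by_cases hc : v.getD j false = v.getD (j+1) false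
      · rw [← hc, Ahat_step_same v j hjv]
        have h1 : cle (Ahat v j (v.getD j false)) (Shat (zW v) j) :=
          cle_trans (ih.2 (by omega)) (Ahat_le_Shat _ _ _)
        have h2 : cle (Shat (zW v) j) ((X+1) * Shat (zW v) j) :=
          cle_self_mul_X1 (nn_Shat _ _)
        exact cle_trans (cle_trans h1 h2) (cle_self_add nn_X1)
      · rw [Ahat_step_ne v j hjv _ hc]
        exact cle_add (cle_mul_left _ nn_X1 (ih.1 (by omega))) (cle_refl _)

/-- The key gap at a non-alternating position. -/
lemma gap (k : ℕ) (hk1 : 1 ≤ k) (hkm : k + 1 ≤ v.length)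
    (heq : v.getD (k-1) false = v.getD k false) :
    cle (Ahat v k (v.getD k false) + (X * (X+1)^k + (X+1)))
      (Ahat (zW v) k ((zW v).getD k false)) := by
  obtain ⟨j, rfl⟩ : ∃ j, k = j + 1 := ⟨k - 1, by omega⟩
  have hjv : j < v.length := by omega
  have hjz : j < (zW v).length := by rw [zW_length]; omega
  have hzstep : Ahat (zW v) (j+1) ((zW v).getD (j+1) false)
      = (X+1) * Shat (zW v) j + (X+1) := by
    apply Ahat_step_ne (zW v) j hjz
    exact zW_alt v j (by omega)
  rw [hzstep]
  have heq' : v.getD j false = v.getD (j+1) false := by simpa using heq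
  rw [← heq', Ahat_step_same v j hjv]
  -- goal : cle (Ahat v j a + (X(X+1)^{j+1} + (X+1))) ((X+1) Shat z j + (X+1))
  have h1 : cle ((X+1) * Shat v j) ((X+1) * Shat (zW v) j) :=
    cle_mul_left _ nn_X1 ((invariants v j).1 (by omega))
  have h2 : cle (Ahat v j (v.getD j false) + X * (X+1)^(j+1)) ((X+1) * Shat v j) := by
    have ha : cle (Ahat v j (v.getD j false)) (Shat v j) := Ahat_le_Shat _ _ _
    have hb : cle (X * (X+1)^(j+1)) (X * Shat v j) :=
      cle_mul_left _ nn_X (Shat_lower v j (by omega))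
    have hc : (X+1) * Shat v j = Shat v j + X * Shat v j := by ring
    rw [hc]
    exact cle_add ha hb
  intro i
  have e1 := h1 i
  have e2 := h2 i
  simp only [coeff_add] at e1 e2 ⊢
  linarith

/-- Accumulated strict gap on the S-values. -/
lemma final_gap (k : ℕ) (hk1 : 1 ≤ k) (hkm : k + 1 ≤ v.length)
    (heq : v.getD (k-1) false = v.getD k false) :
    ∀ j, k + 1 ≤ j → j ≤ v.length →
      cle (Shat v j + (X+1)^(j-k-1) * (X * (X+1)^k + (X+1))) (Shat (zW v) j) := by
  intro j
  induction j with
  | zero => intro h _; omega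
  | succ j ih =>
    intro hkj hjm
    have hjv : j < v.length := by omega
    have hjz : j < (zW v).length := by rw [zW_length]; omega
    rw [Shat_step v j hjv, Shat_step (zW v) j hjz]
    rcases Nat.lt_or_ge k j with hlt | hge
    · -- j > k : use ih
      have ih' := ih (by omega) (by omega)
      have h1 : cle ((X+1) * (Shat v j + (X+1)^(j-k-1) * (X * (X+1)^k + (X+1))))
          ((X+1) * Shat (zW v) j) := cle_mul_left _ nn_X1 ih'
      have h2 := (invariants v j).2 (by omega)
      have hexp : (X+1) * (Shat v j + (X+1)^(j-k-1) * (X * (X+1)^k + (X+1)))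
          = (X+1) * Shat v j + (X+1)^(j+1-k-1) * (X * (X+1)^k + (X+1)) := by
        have : j + 1 - k - 1 = (j - k - 1) + 1 := by omega
        rw [this, pow_succ]
        ring
      rw [hexp] at h1
      intro i
      have e1 := h1 i
      have e2 := h2 i
      simp only [coeff_add] at e1 e2 ⊢
      linarith
    · -- j = k : base case
      have hjk : j = k := by omega
      subst hjk
      have h1 : cle ((X+1) * Shat v j) ((X+1) * Shat (zW v) j) :=
        cle_mul_left _ nn_X1 ((invariants v j).1 (by omega))
      have h2 := gap v j hk1 (by omega) heq
      have hexp : j + 1 - j - 1 = 0 := by omega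
      rw [hexp, pow_zero, one_mul]
      intro i
      have e1 := h1 i
      have e2 := h2 i
      simp only [coeff_add] at e1 e2 ⊢
      linarith

end Main

theorem stmt10 (n : ℕ) (hn : 1 ≤ n) (v : List Bool) (hv : v.length = n - 1)
    (hna : ¬ List.Chain' (· ≠ ·) v) :
    ∀ i ≤ n - 1, (fPoly v).coeff i < (fPoly (zWord (n - 1))).coeff i := by
  set m := n - 1 with hm
  -- extract a non-alternating position
  unfold List.Chain' at hna
  rw [List.isChain_iff_getElem] at hna
  push_neg at hna
  obtain ⟨p, hp, hpeq⟩ := hna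
  set k := p + 1 with hk
  have hkm : k + 1 ≤ v.length := by omega
  have heqD : v.getD (k-1) false = v.getD k false := by
    have h1 : k - 1 = p := by omega
    rw [h1, List.getD_eq_getElem v false (show p < v.length by omega),
      List.getD_eq_getElem v false (show k < v.length by omega)]
    simpa [List.get_eq_getElem, hk] using hpeq
  have final := final_gap v k (by omega) hkm heqD v.length (by omega) (le_refl _)
  -- identify fPoly with Shat
  have hfv : fPoly v = 1 + Shat v v.length := rfl
  have hzeq : zWord m = zW v := by rw [zWord, zW, hv]
  have hzlen : (zWord m).length = v.length := by rw [hzeq, zW_length]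
  have hfz : fPoly (zWord m) = 1 + Shat (zW v) v.length := by
    rw [fPoly, hzlen, hzeq]; rfl
  -- the explicit positive lower bound
  have hG : ((X:Polynomial ℤ)+1)^(v.length - k - 1) * (X * (X+1)^k + (X+1))
      = X * (X+1)^(v.length - 1) + (X+1)^(v.length - k) := by
    have h1 : v.length - k - 1 + k = v.length - 1 := by omega
    have h2 : v.length - k - 1 + 1 = v.length - k := by omega
    calc (X+1)^(v.length - k - 1) * (X * (X+1)^k + (X+1 : Polynomial ℤ))
        = X * ((X+1)^(v.length - k - 1) * (X+1)^k)
          + (X+1)^(v.length - k - 1) * (X+1)^1 := by ring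
      _ = X * (X+1)^(v.length - 1) + (X+1)^(v.length - k) := by
          rw [← pow_add, ← pow_add, h1, h2]
  intro i hi
  have hfin := final i
  rw [hG] at hfin
  simp only [coeff_add] at hfin
  have hpos : 0 < (X * (X+1)^(v.length - 1) + ((X+1):Polynomial ℤ)^(v.length - k)).coeff i := by
    rw [coeff_add]
    rcases i with _ | i'
    · have h1 : ((X : Polynomial ℤ) * (X+1)^(v.length - 1)).coeff 0 = 0 := by
        rw [Polynomial.mul_coeff_zero, coeff_X_zero, zero_mul]
      rw [h1, coeff_X_add_one_pow]
      simp
    · have h1 : ((X : Polynomial ℤ) * (X+1)^(v.length - 1)).coeff (i'+1)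
          = ((X+1 : Polynomial ℤ)^(v.length - 1)).coeff i' := by
        rw [Polynomial.coeff_X_mul]
      rw [h1, coeff_X_add_one_pow, coeff_X_add_one_pow]
      have hc : 0 < (v.length - 1).choose i' := by
        apply Nat.choose_pos
        omega
      positivity
  rw [hfv, hfz]
  simp only [coeff_add] at hfin hpos ⊢
  linarith
end
end

section
/- For any word v over {x,y}, the number of subsets T of the positions of v such that the subword v^T is alternating (including T = ∅) equals the number of factorizations v = u_1 ··· u_k (k ≥ 1) in which each of u_1,...,u_{k-1} is of the form x^i y or y^i x with i ≥ 0 and u_k is arbitrary (possibly empty). -/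
/-- A word of the form `x^i y` or `y^i x` (with `x = false`, `y = true`). -/
def GoodFactor (w : List Bool) : Prop :=
  (∃ i, w = List.replicate i false ++ [true]) ∨
  (∃ i, w = List.replicate i true ++ [false])

def shiftE : ℕ ↪ ℕ := ⟨Nat.succ, Nat.succ_injective⟩

lemma mem_map_shift (T : Finset ℕ) (n : ℕ) : (n + 1 ∈ T.map shiftE) ↔ n ∈ T := by
  constructor
  · intro h
    rcases Finset.mem_map.1 h with ⟨a, ha, hak⟩
    simp only [shiftE, Function.Embedding.coeFn_mk, Nat.succ_eq_add_one] at hak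
    have : a = n := by omega
    exact this ▸ ha
  · intro h; exact Finset.mem_map.2 ⟨n, h, rfl⟩

lemma filter_enumFrom_shift (v : List Bool) (P Q : ℕ → Bool) (h : ∀ n, P (n+1) = Q n) :
    ∀ k : ℕ, ((v.zipIdx (k+1)).filter (fun p => P p.2)).map Prod.fst
      = ((v.zipIdx k).filter (fun p => Q p.2)).map Prod.fst := by
  induction v with
  | nil => intro k; rfl
  | cons c v ih =>
    intro k
    simp only [List.zipIdx_cons, List.filter_cons]
    cases hq : Q k
    · rw [if_neg (by simp [h k, hq]), if_neg (by simp [hq])]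
      exact ih (k+1)
    · rw [if_pos (by simp [h k, hq]), if_pos (by simp [hq]), List.map_cons, List.map_cons,
        ih (k+1)]

lemma filter_enumFrom_congr (v : List Bool) (P Q : ℕ → Bool) :
    ∀ k : ℕ, (∀ n, k ≤ n → P n = Q n) →
      ((v.zipIdx k).filter (fun p => P p.2)).map Prod.fst
        = ((v.zipIdx k).filter (fun p => Q p.2)).map Prod.fst := by
  induction v with
  | nil => intro k _; rfl
  | cons c v ih =>
    intro k h
    simp only [List.zipIdx_cons, List.filter_cons]
    cases hq : Q k
    · rw [if_neg (by simp [h k le_rfl, hq]), if_neg (by simp [hq])]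
      exact ih (k+1) (fun n hn => h n (by omega))
    · rw [if_pos (by simp [h k le_rfl, hq]), if_pos (by simp [hq]), List.map_cons, List.map_cons,
        ih (k+1) (fun n hn => h n (by omega))]

lemma subword_cons_notmem (c : Bool) (v : List Bool) (T : Finset ℕ) (h0 : 0 ∉ T) :
    subword (c :: v) (T.map shiftE) = subword v T := by
  have h1 : ¬ (0 + 1 ∈ T.map shiftE) := fun h => h0 ((mem_map_shift T 0).1 h)
  simp only [subword]
  rw [List.zipIdx_cons, List.filter_cons, if_neg (by simp [h1])]
  exact filter_enumFrom_shift v (fun n => decide (n + 1 ∈ T.map shiftE))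
    (fun n => decide (n + 1 ∈ T)) (fun n => by rw [decide_eq_decide]; exact mem_map_shift T (n+1)) 0

lemma subword_cons_mem (c : Bool) (v : List Bool) (T : Finset ℕ) :
    subword (c :: v) (insert 1 (T.map shiftE)) = c :: subword v T := by
  simp only [subword]
  rw [List.zipIdx_cons, List.filter_cons,
    if_pos (by simp : decide ((0:ℕ) + 1 ∈ insert 1 (T.map shiftE)) = true), List.map_cons]
  have e1 := filter_enumFrom_congr v (fun n => decide (n + 1 ∈ insert 1 (T.map shiftE)))
      (fun n => decide (n + 1 ∈ T.map shiftE)) 1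
      (fun n hn => by
        simp only [decide_eq_decide, Finset.mem_insert]
        constructor
        · rintro (h | h); · omega
          exact h
        · exact Or.inr)
  have e2 := filter_enumFrom_shift v (fun n => decide (n + 1 ∈ T.map shiftE))
    (fun n => decide (n + 1 ∈ T)) (fun n => by rw [decide_eq_decide]; exact mem_map_shift T (n+1)) 0
  exact congrArg (c :: ·) (e1.trans e2)

lemma map_image_pred (T : Finset ℕ) (h : ∀ t ∈ T, 2 ≤ t) : (T.image (· - 1)).map shiftE = T := by
  ext x
  simp only [Finset.mem_map, Finset.mem_image, shiftE, Function.Embedding.coeFn_mk,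
    Nat.succ_eq_add_one]
  constructor
  · rintro ⟨a, ⟨t, ht, rfl⟩, rfl⟩
    have := h t ht
    have hx : t - 1 + 1 = t := by omega
    rwa [hx]
  · intro hx
    exact ⟨x - 1, ⟨x, hx, rfl⟩, by have := h x hx; omega⟩

lemma image_pred_map (T' : Finset ℕ) (h : 0 ∉ T') : (T'.map shiftE).image (· - 1) = T' := by
  ext x
  simp only [Finset.mem_image, Finset.mem_map, shiftE, Function.Embedding.coeFn_mk,
    Nat.succ_eq_add_one]
  constructor
  · rintro ⟨a, ⟨t, ht, rfl⟩, rfl⟩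
    simpa using ht
  · intro hx
    exact ⟨x + 1, ⟨x, hx, rfl⟩, by omega⟩

lemma card_split (c : Bool) (w : List Bool) (C : List Bool → Prop) [DecidablePred C] :
    ((Finset.Icc 1 (w.length + 1)).powerset.filter (fun T => C (subword (c :: w) T))).card
      = ((Finset.Icc 1 w.length).powerset.filter (fun T => C (subword w T))).card
        + ((Finset.Icc 1 w.length).powerset.filter (fun T => C (c :: subword w T))).card := by
  classical
  set n := w.length
  set s := (Finset.Icc 1 (n + 1)).powerset.filter (fun T => C (subword (c :: w) T)) with hs
  rw [← Finset.card_filter_add_card_filter_not (s := s) (fun T => (1 : ℕ) ∈ T)]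
  have hsub : ∀ T ∈ s, T ⊆ Finset.Icc 1 (n + 1) ∧ C (subword (c :: w) T) := by
    intro T hT
    rw [hs, Finset.mem_filter, Finset.mem_powerset] at hT
    exact hT
  have key0 : ∀ T' : Finset ℕ, T' ⊆ Finset.Icc 1 n → (0 : ℕ) ∉ T' := by
    intro T' hT' h0
    have := hT' h0
    simp [Finset.mem_Icc] at this
  rw [Nat.add_comm]
  congr 1
  -- 1 ∉ T case ↔ subsets of Icc 1 n, plain subword
  · apply Finset.card_bij' (i := fun T _ => T.image (· - 1)) (j := fun T' _ => T'.map shiftE)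
    · intro T hT
      rw [Finset.mem_filter] at hT
      obtain ⟨hTs, h1T⟩ := hT
      obtain ⟨hTsub, _⟩ := hsub T hTs
      apply map_image_pred
      intro t ht
      have := hTsub ht
      simp only [Finset.mem_Icc] at this
      rcases Nat.lt_or_ge t 2 with h | h
      · interval_cases t
        · omega
        · exact absurd ht h1T
      · exact h
    · intro T' hT'
      rw [Finset.mem_filter, Finset.mem_powerset] at hT'
      exact image_pred_map T' (key0 T' hT'.1)
    · intro T hT
      rw [Finset.mem_filter] at hT
      obtain ⟨hTs, h1T⟩ := hT
      obtain ⟨hTsub, hTC⟩ := hsub T hTs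
      have h2 : ∀ t ∈ T, 2 ≤ t := by
        intro t ht
        have := hTsub ht
        simp only [Finset.mem_Icc] at this
        rcases Nat.lt_or_ge t 2 with h | h
        · interval_cases t
          · omega
          · exact absurd ht h1T
        · exact h
      rw [Finset.mem_filter, Finset.mem_powerset]
      constructor
      · intro x hx
        simp only [Finset.mem_image] at hx
        obtain ⟨t, ht, rfl⟩ := hx
        have := hTsub ht
        have := h2 t ht
        simp only [Finset.mem_Icc] at *
        omega
      · have : subword w (T.image (· - 1)) = subword (c :: w) T := by
          conv_rhs => rw [← map_image_pred T h2]
          rw [subword_cons_notmem]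
          intro h0
          simp only [Finset.mem_image] at h0
          obtain ⟨t, ht, h⟩ := h0
          have := h2 t ht
          omega
        rwa [this]
    · intro T' hT'
      rw [Finset.mem_filter, Finset.mem_powerset] at hT'
      obtain ⟨hT'sub, hT'C⟩ := hT'
      have h0 : (0:ℕ) ∉ T' := key0 T' hT'sub
      rw [Finset.mem_filter]
      refine ⟨?_, ?_⟩
      · rw [hs, Finset.mem_filter, Finset.mem_powerset]
        constructor
        · intro x hx
          simp only [Finset.mem_map, shiftE, Function.Embedding.coeFn_mk] at hx
          obtain ⟨t, ht, rfl⟩ := hx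
          have := hT'sub ht
          simp only [Finset.mem_Icc] at *
          omega
        · rwa [subword_cons_notmem c w T' h0]
      · intro h1
        simp only [Finset.mem_map, shiftE, Function.Embedding.coeFn_mk] at h1
        obtain ⟨t, ht, h⟩ := h1
        have := hT'sub ht
        simp only [Finset.mem_Icc] at this
        omega
  -- 1 ∈ T case ↔ subsets of Icc 1 n, c :: subword
  · apply Finset.card_bij' (i := fun T _ => (T.erase 1).image (· - 1))
      (j := fun T' _ => insert 1 (T'.map shiftE))
    · intro T hT
      rw [Finset.mem_filter] at hT
      obtain ⟨hTs, h1T⟩ := hT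
      obtain ⟨hTsub, _⟩ := hsub T hTs
      have h2 : ∀ t ∈ T.erase 1, 2 ≤ t := by
        intro t ht
        rw [Finset.mem_erase] at ht
        have := hTsub ht.2
        simp only [Finset.mem_Icc] at this
        omega
      rw [map_image_pred _ h2, Finset.insert_erase h1T]
    · intro T' hT'
      rw [Finset.mem_filter, Finset.mem_powerset] at hT'
      have h0 : (0:ℕ) ∉ T' := key0 T' hT'.1
      have h1 : (1:ℕ) ∉ T'.map shiftE := by
        intro h
        simp only [Finset.mem_map, shiftE, Function.Embedding.coeFn_mk] at h
        obtain ⟨t, ht, h⟩ := h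
        have : t = 0 := by omega
        exact h0 (this ▸ ht)
      rw [Finset.erase_insert h1, image_pred_map T' h0]

    · intro T hT
      rw [Finset.mem_filter] at hT
      obtain ⟨hTs, h1T⟩ := hT
      obtain ⟨hTsub, hTC⟩ := hsub T hTs
      have h2 : ∀ t ∈ T.erase 1, 2 ≤ t := by
        intro t ht
        rw [Finset.mem_erase] at ht
        have := hTsub ht.2
        simp only [Finset.mem_Icc] at this
        omega
      rw [Finset.mem_filter, Finset.mem_powerset]
      constructor
      · intro x hx
        simp only [Finset.mem_image] at hx
        obtain ⟨t, ht, rfl⟩ := hx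
        have := h2 t ht
        have := hTsub (Finset.mem_erase.1 ht).2
        simp only [Finset.mem_Icc] at *
        omega
      · have hrec : T = insert 1 (((T.erase 1).image (· - 1)).map shiftE) := by
          rw [map_image_pred _ h2, Finset.insert_erase h1T]
        have : subword (c :: w) T = c :: subword w ((T.erase 1).image (· - 1)) := by
          conv_lhs => rw [hrec]
          exact subword_cons_mem c w _
        rw [this] at hTC
        exact hTC
    · intro T' hT'
      rw [Finset.mem_filter, Finset.mem_powerset] at hT'
      obtain ⟨hT'sub, hT'C⟩ := hT'
      rw [Finset.mem_filter]
      refine ⟨?_, Finset.mem_insert_self 1 _⟩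
      rw [hs, Finset.mem_filter, Finset.mem_powerset]
      constructor
      · intro x hx
        rw [Finset.mem_insert] at hx
        rcases hx with rfl | hx
        · simp [Finset.mem_Icc]
        simp only [Finset.mem_map, shiftE, Function.Embedding.coeFn_mk] at hx
        obtain ⟨t, ht, rfl⟩ := hx
        have := hT'sub ht
        simp only [Finset.mem_Icc] at *
        omega
      · rwa [subword_cons_mem c w T']
/-- auxiliary count: alternating subwords whose first letter differs from `c` (or empty). -/
def sfun (c : Bool) : List Bool → ℕ
  | [] => 1
  | d :: w => if d = c then sfun c w else sfun c w + sfun d w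

/-- count of alternating subwords. -/
def gfun : List Bool → ℕ
  | [] => 1
  | c :: w => gfun w + sfun c w

lemma sfun_add_sfun (w : List Bool) (c : Bool) : sfun c w + sfun (!c) w = 1 + gfun w := by
  induction w generalizing c with
  | nil => rfl
  | cons d w ih =>
    have key := ih d
    rcases Bool.eq_or_eq_not c d with h | h <;> subst h <;>
      simp [sfun, gfun, Bool.eq_not_self, Bool.not_eq_self] <;> omega

lemma sfun_replicate_append (c : Bool) (a : ℕ) (t : List Bool) :
    sfun c (List.replicate a c ++ t) = sfun c t := by
  induction a with
  | zero => rfl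
  | succ a ih => simpa [sfun, List.replicate_succ] using ih

lemma gfun_run (c : Bool) (w w'' : List Bool) (a : ℕ) (hw : w = List.replicate a c ++ (!c) :: w'') :
    gfun (c :: w) = 1 + gfun w + gfun w'' := by
  subst hw
  have h1 : sfun c (List.replicate a c ++ (!c) :: w'') = 1 + gfun w'' := by
    rw [sfun_replicate_append]
    have := sfun_add_sfun w'' (c)
    simp [sfun, Bool.not_eq_self, Bool.eq_not_self] at *
    omega
  simp [gfun, h1]; omega

lemma gfun_const (c : Bool) (a : ℕ) :
    gfun (c :: List.replicate a c) = 1 + gfun (List.replicate a c) := by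
  have h1 : sfun c (List.replicate a c) = 1 := by
    simpa [sfun] using sfun_replicate_append c a []
  simp [gfun, h1]; omega

lemma counts (v : List Bool) :
    (((Finset.Icc 1 v.length).powerset.filter
        (fun T => List.IsChain (· ≠ ·) (subword v T))).card = gfun v)
    ∧ ∀ d : Bool, (((Finset.Icc 1 v.length).powerset.filter
        (fun T => List.IsChain (· ≠ ·) (d :: subword v T))).card = sfun d v) := by
  induction v with
  | nil =>
    constructor
    · simp [subword, gfun]
    · intro d; simp [subword, sfun]
  | cons c w ih =>
    obtain ⟨ihA, ihS⟩ := ih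
    constructor
    · have := card_split c w (fun l => List.IsChain (· ≠ ·) l)
      simp only [List.length_cons] at *
      rw [this, ihA, ihS c]
      rfl
    · intro d
      have := card_split c w (fun l => List.IsChain (· ≠ ·) (d :: l))
      simp only [List.length_cons] at *
      rw [this, ihS d]
      by_cases hdc : c = d
      · subst hdc
        have hzero : ((Finset.Icc 1 w.length).powerset.filter
            (fun T => List.IsChain (· ≠ ·) (c :: c :: subword w T))).card = 0 := by
          rw [Finset.card_eq_zero, Finset.filter_eq_empty_iff]
          intro T _
          rw [List.isChain_cons_cons]
          simp
        rw [hzero, sfun]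
        simp
      · have heq : ((Finset.Icc 1 w.length).powerset.filter
            (fun T => List.IsChain (· ≠ ·) (d :: c :: subword w T))).card
            = ((Finset.Icc 1 w.length).powerset.filter
            (fun T => List.IsChain (· ≠ ·) (c :: subword w T))).card := by
          congr 1
          apply Finset.filter_congr
          intro T _
          rw [List.isChain_cons_cons]
          constructor
          · rintro ⟨_, h⟩; exact h
          · intro h; exact ⟨fun hh => hdc hh.symm, h⟩
        rw [heq, ihS c]
        simp [sfun, hdc]
lemma goodFactor_iff (u : List Bool) :
    GoodFactor u ↔ ∃ (c : Bool) (i : ℕ), u = List.replicate i c ++ [!c] := by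
  constructor
  · rintro (⟨i, rfl⟩ | ⟨i, rfl⟩)
    · exact ⟨false, i, rfl⟩
    · exact ⟨true, i, rfl⟩
  · rintro ⟨c, i, rfl⟩
    cases c
    · exact Or.inl ⟨i, rfl⟩
    · exact Or.inr ⟨i, rfl⟩

lemma goodFactor_ne_nil {u : List Bool} (h : GoodFactor u) : u ≠ [] := by
  rcases (goodFactor_iff u).1 h with ⟨c, i, rfl⟩
  simp

lemma goodFactor_single (c : Bool) : GoodFactor [c] := by
  rw [goodFactor_iff]
  exact ⟨!c, 0, by simp⟩

lemma goodFactor_run (c : Bool) (i : ℕ) : GoodFactor (List.replicate i c ++ [!c]) := by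
  rw [goodFactor_iff]
  exact ⟨c, i, rfl⟩

lemma length_le_join (L : List (List Bool)) (h : ∀ u ∈ L.dropLast, u ≠ []) :
    L.length ≤ L.flatten.length + 1 := by
  induction L with
  | nil => simp
  | cons u M ih =>
    cases M with
    | nil => simp
    | cons u' M' =>
      have hd : (u :: u' :: M').dropLast = u :: (u' :: M').dropLast :=
        List.dropLast_cons_of_ne_nil (by simp)
      have hu : u ≠ [] := h u (by rw [hd]; exact List.mem_cons_self)
      have ih' := ih (fun x hx => h x (by rw [hd]; exact List.mem_cons_of_mem _ hx))
      have h1 : 1 ≤ u.length := List.length_pos_iff.2 hu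
      clear ih h hd hu
      simp only [List.flatten_cons, List.length_append, List.length_cons] at ih' ⊢
      omega

lemma mem_length_le_join (u : List Bool) (L : List (List Bool)) (h : u ∈ L) :
    u.length ≤ L.flatten.length := by
  induction L with
  | nil => simp at h
  | cons u' M ih =>
    rcases List.mem_cons.1 h with rfl | h
    · simp
    · have := ih h
      simp only [List.flatten_cons, List.length_append] at this ⊢
      omega

lemma eq_of_lengths_join (L1 : List (List Bool)) : ∀ L2 : List (List Bool),
    L1.map List.length = L2.map List.length → L1.flatten = L2.flatten → L1 = L2 := by
  induction L1 with
  | nil =>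
    intro L2 h _
    cases L2
    · rfl
    · simp at h
  | cons u M ih =>
    intro L2 h hj
    cases L2 with
    | nil => simp at h
    | cons u' M' =>
      simp only [List.map_cons, List.cons.injEq] at h
      simp only [List.flatten_cons] at hj
      obtain ⟨h1, h2⟩ := List.append_inj hj h.1
      rw [h1, ih M' h.2 h2]

instance factT_finite (v : List Bool) :
    Finite {L : List (List Bool) // L ≠ [] ∧ L.flatten = v ∧ ∀ w ∈ L.dropLast, GoodFactor w} := by
  set n := v.length with hn
  haveI := (List.finite_length_le (Fin (n+1)) (n+1)).to_subtype
  apply Finite.of_injective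
    (f := fun L : {L : List (List Bool) // L ≠ [] ∧ L.flatten = v ∧ ∀ w ∈ L.dropLast, GoodFactor w} =>
      (⟨L.val.map (fun u => (⟨u.length % (n+1), Nat.mod_lt _ (Nat.succ_pos n)⟩ : Fin (n+1))),
        by
          obtain ⟨L, hne, hj, hg⟩ := L
          simp only [List.length_map, Set.mem_setOf_eq]
          have := length_le_join L (fun u hu => goodFactor_ne_nil (hg u hu))
          rw [hj] at this
          omega⟩ : {l : List (Fin (n+1)) | l.length ≤ n+1}))
  intro L1 L2 h
  apply Subtype.ext
  have h' : L1.val.map (fun u => u.length % (n+1)) = L2.val.map (fun u => u.length % (n+1)) := by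
    have := congrArg (fun l => l.val.map Fin.val) h
    simpa [List.map_map, Function.comp_def] using this
  have hlen : ∀ (L : {L : List (List Bool) // L ≠ [] ∧ L.flatten = v ∧ ∀ w ∈ L.dropLast, GoodFactor w}),
      L.val.map (fun u => u.length % (n+1)) = L.val.map List.length := by
    intro L
    apply List.map_congr_left
    intro u hu
    have := mem_length_le_join u L.val hu
    rw [L.2.2.1] at this
    exact Nat.mod_eq_of_lt (by omega)
  rw [hlen L1, hlen L2] at h'
  exact eq_of_lengths_join _ _ h' (L1.2.2.1.trans L2.2.2.1.symm)

abbrev FT (v : List Bool) : Type :=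
  {L : List (List Bool) // L ≠ [] ∧ L.flatten = v ∧ ∀ w ∈ L.dropLast, GoodFactor w}

lemma good_prefix_replicate {u m : List Bool} {b : ℕ} {c : Bool} (hg : GoodFactor u)
    (h : u ++ m = List.replicate b c) :
    ∃ b', b = b' + 1 ∧ u = [c] ∧ m = List.replicate b' c := by
  rcases (goodFactor_iff u).1 hg with ⟨e, i, rfl⟩
  have hne : (!e) = c := by
    have hm : (!e) ∈ List.replicate b c := by
      rw [← h]
      simp
    exact List.eq_of_mem_replicate hm
  cases i with
  | zero =>
    simp only [List.replicate_zero, List.nil_append] at h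
    cases b with
    | zero => simp at h
    | succ b' =>
      rw [List.replicate_succ] at h
      simp only [List.cons_append, List.nil_append] at h
      injection h with h1 h2
      exact ⟨b', rfl, by simp [hne], h2⟩
  | succ i =>
    exfalso
    have he : e = c := by
      have hm : e ∈ List.replicate b c := by
        rw [← h, List.replicate_succ]
        simp
      exact List.eq_of_mem_replicate hm
    rw [he] at hne
    simp at hne

lemma good_prefix_run (c : Bool) : ∀ (b : ℕ) (w'' u m : List Bool), GoodFactor u →
    u ++ m = List.replicate (b+1) c ++ (!c) :: w'' →
    (u = [c] ∧ m = List.replicate b c ++ (!c) :: w'') ∨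
    (u = List.replicate (b+1) c ++ [!c] ∧ m = w'') := by
  intro b
  induction b with
  | zero =>
    intro w'' u m hg h
    rcases (goodFactor_iff u).1 hg with ⟨e, i, rfl⟩
    rw [show List.replicate (0+1) c = [c] from rfl] at h
    simp only [List.replicate_zero, List.nil_append, List.cons_append] at h
    cases i with
    | zero =>
      simp only [List.replicate_zero, List.nil_append, List.cons_append] at h
      injection h with h1 h2
      refine Or.inl ⟨by simp [h1], by simp [h2]⟩
    | succ i =>
      rw [List.replicate_succ] at h
      simp only [List.cons_append] at h
      injection h with h1 h2
      cases i with
      | zero =>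
        simp only [List.replicate_zero, List.nil_append, List.cons_append] at h2
        injection h2 with h3 h4
        refine Or.inr ⟨by simp [h1], h4⟩
      | succ i =>
        exfalso
        rw [List.replicate_succ] at h2
        simp only [List.cons_append] at h2
        injection h2 with h3 h4
        rw [h1] at h3
        simp at h3
  | succ b ih =>
    intro w'' u m hg h
    rcases (goodFactor_iff u).1 hg with ⟨e, i, rfl⟩
    rw [List.replicate_succ (n := b + 1)] at h
    cases i with
    | zero =>
      simp only [List.replicate_zero, List.nil_append, List.cons_append] at h
      injection h with h1 h2
      exact Or.inl ⟨by simp [h1], h2⟩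
    | succ i =>
      rw [List.replicate_succ] at h
      simp only [List.cons_append] at h
      injection h with h1 h2
      have h2' : (List.replicate i e ++ [!e]) ++ m
          = List.replicate (b+1) c ++ (!c) :: w'' := by simpa using h2
      rcases ih w'' _ m (goodFactor_run e i) h2' with ⟨ha, hb⟩ | ⟨ha, hb⟩
      · exfalso
        have hl := congrArg List.length ha
        simp at hl
        subst hl
        simp only [List.replicate_zero, List.nil_append] at ha
        injection ha with hx _
        rw [h1] at hx
        simp at hx
      · refine Or.inr ⟨?_, hb⟩
        have hrw : List.replicate (b+1+1) c ++ [!c] = c :: (List.replicate (b+1) c ++ [!c]) := by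
          rw [List.replicate_succ]
          simp
        rw [hrw, ← ha, List.replicate_succ, List.cons_append, h1]

def singleF (v : List Bool) : FT v :=
  ⟨[v], by simp, by simp, by simp⟩

def consF (u : List Bool) (hu : GoodFactor u) {w v : List Bool} (h : u ++ w = v) (M : FT w) :
    FT v :=
  ⟨u :: M.val, by simp, by
    show u ++ M.val.flatten = v
    rw [M.2.2.1, h], by
    intro x hx
    rw [List.dropLast_cons_of_ne_nil M.2.1] at hx
    rcases List.mem_cons.1 hx with rfl | hx
    · exact hu
    · exact M.2.2.2 x hx⟩

lemma cardE0 : Nat.card (FT ([] : List Bool)) = 1 := by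
  rw [← Nat.card_unique (α := PUnit.{1})]
  refine (Nat.card_eq_of_bijective (f := fun _ : PUnit.{1} => singleF ([] : List Bool)) ?_).symm
  constructor
  · intro a b _; rfl
  · rintro ⟨L, h1, h2, h3⟩
    refine ⟨PUnit.unit, ?_⟩
    apply Subtype.ext
    show [([] : List Bool)] = L
    cases L with
    | nil => exact absurd rfl h1
    | cons u M =>
      cases M with
      | nil =>
        have : u = [] := by simpa [List.flatten] using h2
        rw [this]
      | cons u' M' =>
        exfalso
        have hgood := h3 u (by
          rw [List.dropLast_cons_of_ne_nil (by simp)]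
          exact List.mem_cons_self)
        have : u ++ (u' :: M').flatten = [] := by
          rw [show u ++ (u' :: M').flatten = (u :: u' :: M').flatten from rfl]
          exact h2
        exact goodFactor_ne_nil hgood (List.append_eq_nil_iff.1 this).1

lemma cardE1 (c : Bool) (a : ℕ) :
    Nat.card (FT (c :: List.replicate a c)) = 1 + Nat.card (FT (List.replicate a c)) := by
  have hb : Function.Bijective
      (Sum.elim (fun _ : Unit => singleF (c :: List.replicate a c))
        (fun M : FT (List.replicate a c) =>
          consF [c] (goodFactor_single c) rfl M)) := by
    constructor
    · rintro (⟨⟩ | M1) (⟨⟩ | M2) h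
      · rfl
      · exfalso
        have := congrArg Subtype.val h
        simp only [Sum.elim_inl, Sum.elim_inr, singleF, consF, List.cons.injEq] at this
        exact M2.2.1 this.2.symm
      · exfalso
        have := congrArg Subtype.val h
        simp only [Sum.elim_inl, Sum.elim_inr, singleF, consF, List.cons.injEq] at this
        exact M1.2.1 this.2
      · have := congrArg Subtype.val h
        simp only [Sum.elim_inr, consF, List.cons.injEq] at this
        rw [Subtype.ext this.2]
    · rintro ⟨L, h1, h2, h3⟩
      cases L with
      | nil => exact absurd rfl h1
      | cons u M =>
        cases M with
        | nil =>
          refine ⟨Sum.inl (), ?_⟩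
          apply Subtype.ext
          show [c :: List.replicate a c] = [u]
          have : u = c :: List.replicate a c := by simpa [List.flatten] using h2
          rw [this]
        | cons u' M' =>
          have hdl : (u :: u' :: M').dropLast = u :: (u' :: M').dropLast :=
            List.dropLast_cons_of_ne_nil (by simp)
          have hgood := h3 u (by rw [hdl]; exact List.mem_cons_self)
          have h2' : u ++ (u' :: M').flatten = List.replicate (a + 1) c := by
            rw [List.replicate_succ, ← h2]
            rfl
          obtain ⟨b', hb', hu, hm⟩ := good_prefix_replicate hgood h2'
          have hba : b' = a := by omega
          subst hba
          refine ⟨Sum.inr ⟨u' :: M', by simp, hm, ?_⟩, ?_⟩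
          · intro x hx
            exact h3 x (by rw [hdl]; exact List.mem_cons_of_mem _ hx)
          · apply Subtype.ext
            show ([c] : List Bool) :: (u' :: M') = u :: u' :: M'
            rw [hu]
  rw [← Nat.card_eq_of_bijective _ hb, Nat.card_sum, Nat.card_unique]

lemma cardE2 (c : Bool) (a : ℕ) (w'' : List Bool) :
    Nat.card (FT (c :: (List.replicate a c ++ (!c) :: w'')))
      = 1 + Nat.card (FT (List.replicate a c ++ (!c) :: w'')) + Nat.card (FT w'') := by
  set v := c :: (List.replicate a c ++ (!c) :: w'') with hv
  have hlong : List.replicate (a+1) c ++ [!c] ++ w'' = v := by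
    rw [hv, List.replicate_succ]
    simp
  have hshort : [c] ++ (List.replicate a c ++ (!c) :: w'') = v := rfl
  have hb : Function.Bijective
      (Sum.elim (fun _ : Unit => singleF v)
        (Sum.elim
          (fun M : FT (List.replicate a c ++ (!c) :: w'') =>
            consF [c] (goodFactor_single c) hshort M)
          (fun M : FT w'' =>
            consF (List.replicate (a+1) c ++ [!c]) (goodFactor_run c (a+1)) hlong M))) := by
    constructor
    · have hlen : (List.replicate (a+1) c ++ [!c]).length = a + 2 := by simp
      rintro (⟨⟩ | M1 | M1) (⟨⟩ | M2 | M2) h <;>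
        have hval := congrArg Subtype.val h <;>
        simp only [Sum.elim_inl, Sum.elim_inr, singleF, consF, List.cons.injEq] at hval
      · rfl
      · exact absurd hval.2.symm M2.2.1
      · exact absurd hval.2.symm M2.2.1
      · exact absurd hval.2 M1.2.1
      · rw [Subtype.ext hval.2]
      · exfalso
        have := congrArg List.length hval.1
        simp at this
      · exact absurd hval.2 M1.2.1
      · exfalso
        have := congrArg List.length hval.1
        simp at this
      · rw [Subtype.ext hval.2]
    · rintro ⟨L, h1, h2, h3⟩
      cases L with
      | nil => exact absurd rfl h1
      | cons u M =>
        cases M with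
        | nil =>
          refine ⟨Sum.inl (), ?_⟩
          apply Subtype.ext
          show [v] = [u]
          have : u = v := by simpa [List.flatten] using h2
          rw [this]
        | cons u' M' =>
          have hdl : (u :: u' :: M').dropLast = u :: (u' :: M').dropLast :=
            List.dropLast_cons_of_ne_nil (by simp)
          have hgood := h3 u (by rw [hdl]; exact List.mem_cons_self)
          have h2' : u ++ (u' :: M').flatten = List.replicate (a+1) c ++ (!c) :: w'' := by
            rw [List.replicate_succ, List.cons_append, ← hv, ← h2]
            rfl
          have h3' : ∀ x ∈ (u' :: M').dropLast, GoodFactor x := by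
            intro x hx
            exact h3 x (by rw [hdl]; exact List.mem_cons_of_mem _ hx)
          rcases good_prefix_run c a w'' u ((u' :: M').flatten) hgood h2' with ⟨hu, hm⟩ | ⟨hu, hm⟩
          · refine ⟨Sum.inr (Sum.inl ⟨u' :: M', by simp, hm, h3'⟩), ?_⟩
            apply Subtype.ext
            show ([c] : List Bool) :: (u' :: M') = u :: u' :: M'
            rw [hu]
          · refine ⟨Sum.inr (Sum.inr ⟨u' :: M', by simp, hm, h3'⟩), ?_⟩
            apply Subtype.ext
            show (List.replicate (a+1) c ++ [!c]) :: (u' :: M') = u :: u' :: M'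
            rw [hu]
  rw [← Nat.card_eq_of_bijective _ hb, Nat.card_sum, Nat.card_sum, Nat.card_unique]
  omega

lemma dropWhile_head_false {p : Bool → Bool} : ∀ {l d : List Bool} {x : Bool},
    List.dropWhile p l = x :: d → p x = false := by
  intro l
  induction l with
  | nil => intro d x h; simp at h
  | cons y l ih =>
    intro d x h
    rw [List.dropWhile_cons] at h
    by_cases hy : p y = true
    · rw [if_pos hy] at h
      exact ih h
    · rw [if_neg hy] at h
      injection h with h1 _
      rw [← h1]
      exact Bool.eq_false_iff.2 hy

lemma rhs_eq : ∀ (n : ℕ) (v : List Bool), v.length ≤ n → Nat.card (FT v) = gfun v := by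
  intro n
  induction n with
  | zero =>
    intro v hv
    have : v = [] := List.length_eq_zero_iff.1 (by omega)
    subst this
    exact cardE0
  | succ n ih =>
    intro v hv
    cases v with
    | nil => exact cardE0
    | cons c w =>
      have hw : w.length ≤ n := by
        simp only [List.length_cons] at hv
        omega
      set a := (w.takeWhile (· == c)).length with ha
      have htk : w.takeWhile (· == c) = List.replicate a c := by
        rw [ha]
        apply List.eq_replicate_of_mem
        intro b hb
        have hb' := List.mem_takeWhile_imp hb
        exact eq_of_beq hb'
      have hsplit : List.replicate a c ++ w.dropWhile (· == c) = w := by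
        rw [← htk]
        exact List.takeWhile_append_dropWhile
      cases hdw : w.dropWhile (· == c) with
      | nil =>
        have hwre : w = List.replicate a c := by
          rw [← hsplit, hdw, List.append_nil]
        rw [hwre, cardE1, gfun_const, ih (List.replicate a c) (by
          rw [← hwre]; exact hw)]
      | cons d w'' =>
        have hd : (d == c) = false := dropWhile_head_false (p := fun x => x == c) hdw
        have hdc : d = !c := by
          revert hd
          cases d <;> cases c <;> decide
        subst hdc
        have hwre : w = List.replicate a c ++ (!c) :: w'' := by
          rw [← hsplit, hdw]
        rw [hwre, cardE2, gfun_run c (List.replicate a c ++ (!c) :: w'') w'' a rfl]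
        have hw2 : w''.length ≤ n := by
          have := congrArg List.length hwre
          simp at this
          omega
        rw [ih _ (by rw [← hwre]; exact hw), ih w'' hw2]

/-- the number of `T` with `v^T` alternating equals the number of
factorizations `v = u_1 ⋯ u_k` with `u_1,…,u_{k-1}` of the form `x^i y` or `y^i x`. -/
theorem stmt12 (v : List Bool) :
    ((Finset.Icc 1 v.length).powerset.filter
        (fun T => List.IsChain (· ≠ ·) (subword v T))).card =
      Nat.card {L : List (List Bool) //
        L ≠ [] ∧ L.flatten = v ∧ ∀ w ∈ L.dropLast, GoodFactor w} := by
  rw [(counts v).1]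
  exact (rhs_eq v.length v le_rfl).symm
end
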